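/- Let (W, 𝒜, P) be a probability space, let μ : W → ℝ be square-integrable with respect to P, and let v : W → ℝ be measurable with v(ω) > 0 for P-almost every ω, with v and log ∘ v both P-integrable and ∫_W v dP > 0. Define the total predictive variance V = ∫_W v dP + Var_P(μ) and the Gaussian entropy function h(t) = 1/2 + (1/2)·log(2πt) for t > 0. Then the information gain, expressed as the difference between the predictive Gaussian entropy and the expected conditional Gaussian entropy, is bounded below: h(V) − ∫_W h(v(ω)) dP(ω) ≥ (1/2)·log( 1 + Var_P(μ) / ∫_W v dP ). -/

import Mathlib

open MeasureTheory ProbabilityTheory Real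

/-- μ-BALD lower bound: with total predictive variance `V = ∫ v ∂P + Var_P(μ)` and the Gaussian
entropy `h t = 1/2 + (1/2) log (2πt)`, the information gain `h V - ∫ h (v ω) ∂P` is bounded
below by `(1/2) log (1 + Var_P(μ) / ∫ v ∂P)`. -/
theorem mu_bald_lower_bound {W : Type*} [MeasurableSpace W] (P : Measure W)
    [IsProbabilityMeasure P] (μ : W → ℝ) (hμ2 : MemLp μ 2 P)
    (v : W → ℝ) (hvm : Measurable v) (hvpos : ∀ᵐ ω ∂P, 0 < v ω)
    (hvint : Integrable v P) (hvlog : Integrable (fun ω => Real.log (v ω)) P)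
    (hvI : 0 < ∫ ω, v ω ∂P)
    (V : ℝ) (hV : V = (∫ ω, v ω ∂P) + variance μ P)
    (h : ℝ → ℝ) (hh : ∀ t : ℝ, h t = 1 / 2 + (1 / 2) * Real.log (2 * π * t)) :
    h V - ∫ ω, h (v ω) ∂P ≥ (1 / 2) * Real.log (1 + variance μ P / ∫ ω, v ω ∂P) := by
  set I : ℝ := ∫ ω, v ω ∂P with hI
  have hvar : 0 ≤ variance μ P := variance_nonneg μ P
  have hVpos : 0 < V := by rw [hV]; linarith
  -- Jensen-type bound: ∫ log v ≤ log I, via log x ≤ x - 1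
  have key : ∫ ω, Real.log (v ω) ∂P ≤ Real.log I := by
    have hmono : ∀ᵐ ω ∂P, Real.log (v ω) ≤ v ω / I - 1 + Real.log I := by
      filter_upwards [hvpos] with ω hω
      have h1 : Real.log (v ω / I) ≤ v ω / I - 1 :=
        Real.log_le_sub_one_of_pos (div_pos hω hvI)
      have h2 : Real.log (v ω / I) = Real.log (v ω) - Real.log I :=
        Real.log_div (ne_of_gt hω) (ne_of_gt hvI)
      linarith
    have hintA : Integrable (fun ω => v ω / I - 1) P :=
      (hvint.div_const I).sub (integrable_const 1)
    have hint2 : Integrable (fun ω => v ω / I - 1 + Real.log I) P :=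
      hintA.add (integrable_const _)
    calc ∫ ω, Real.log (v ω) ∂P ≤ ∫ ω, (v ω / I - 1 + Real.log I) ∂P :=
          integral_mono_ae hvlog hint2 hmono
      _ = I / I - 1 + Real.log I := by
          rw [integral_add hintA (integrable_const _),
            integral_sub (hvint.div_const I) (integrable_const 1),
            integral_div, integral_const, integral_const]
          simp
          rfl
      _ = Real.log I := by
          rw [div_self (ne_of_gt hvI)]; ring
  -- compute ∫ h(v ω)
  have hlog2pi : Integrable (fun ω => Real.log (2 * π * v ω)) P := by
    have : (fun ω => Real.log (2 * π * v ω)) =ᵐ[P]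
        (fun ω => Real.log (2 * π) + Real.log (v ω)) := by
      filter_upwards [hvpos] with ω hω
      rw [Real.log_mul (by positivity) (ne_of_gt hω)]
    exact (((integrable_const (Real.log (2 * π))).add hvlog).congr this.symm)
  have hinth : ∫ ω, h (v ω) ∂P
      = 1 / 2 + (1 / 2) * (Real.log (2 * π) + ∫ ω, Real.log (v ω) ∂P) := by
    have e1 : ∫ ω, h (v ω) ∂P = ∫ ω, (1 / 2 + (1 / 2) * Real.log (2 * π * v ω)) ∂P := by
      congr 1; ext ω; rw [hh]
    rw [e1, integral_add (integrable_const _) (hlog2pi.const_mul _), integral_const,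
      integral_const_mul]
    have e2 : ∫ ω, Real.log (2 * π * v ω) ∂P
        = Real.log (2 * π) + ∫ ω, Real.log (v ω) ∂P := by
      have : (fun ω => Real.log (2 * π * v ω)) =ᵐ[P]
          (fun ω => Real.log (2 * π) + Real.log (v ω)) := by
        filter_upwards [hvpos] with ω hω
        rw [Real.log_mul (by positivity) (ne_of_gt hω)]
      rw [integral_congr_ae this, integral_add (integrable_const _) hvlog, integral_const]
      simp
    rw [e2]; simp
  have hhV : h V = 1 / 2 + (1 / 2) * (Real.log (2 * π) + Real.log V) := by
    rw [hh, Real.log_mul (by positivity) (ne_of_gt hVpos)]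
  have hrhs : Real.log (1 + variance μ P / I) = Real.log V - Real.log I := by
    have : 1 + variance μ P / I = V / I := by
      field_simp [hV]
      linarith
    rw [this, Real.log_div (ne_of_gt hVpos) (ne_of_gt hvI)]
  rw [hhV, hinth, ge_iff_le, hrhs]
  nlinarith [key]
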